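/- Let f : ℝ^{d_x} → ℝ^{d_z} be a linear map with ‖f(x)‖₂ ≤ ‖x‖₂ for all x, and let X ∈ ℝ^{d_x×n}. Then R(f(X)) ≤ R(X'), where X' is any matrix in ℝ^{d_z×n} with the same singular values as X (assuming d_z ≥ rank(X)). Equivalently, (1/2)∑_p log(1 + (d_z/(nε²)) σ_p(f(X))²) ≤ (1/2)∑_p log(1 + (d_z/(nε²)) σ_p(X)²). -/

import Mathlib

open Matrix

noncomputable def codingRate {d : ℕ} {m : Type*} [Fintype m] (ε : ℝ)
    (Z : Matrix (Fin d) m ℝ) : ℝ :=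
  (1 / 2) * Real.log ((1 + ((d : ℝ) / (Fintype.card m * ε ^ 2)) • (Z * Zᵀ)).det)

noncomputable def deltaR {d n : ℕ} (ε : ℝ) (Z₁ Z₂ : Matrix (Fin d) (Fin n) ℝ) : ℝ :=
  codingRate ε (fromCols Z₁ Z₂) - (1 / 2) * codingRate ε Z₁ - (1 / 2) * codingRate ε Z₂

theorem Matrix.isHermitian_transpose_mul_self {m n : Type*} [Fintype m]
    (A : Matrix m n ℝ) : (Aᵀ * A).IsHermitian := by
  have h := isHermitian_conjTranspose_mul_self A
  rwa [conjTranspose_eq_transpose_of_trivial] at h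

noncomputable def sval {d n : ℕ} (A : Matrix (Fin d) (Fin n) ℝ) : Fin n → ℝ :=
  fun p => Real.sqrt ((Matrix.isHermitian_transpose_mul_self A).eigenvalues
    (Tuple.sort ((Matrix.isHermitian_transpose_mul_self A).eigenvalues) p.rev))

noncomputable def colSpan {d n : ℕ} (A : Matrix (Fin d) (Fin n) ℝ) :
    Submodule ℝ (Fin d → ℝ) :=
  Submodule.span ℝ (Set.range Aᵀ)

lemma det_one_add_smul_herm {n : ℕ} (c : ℝ) {H : Matrix (Fin n) (Fin n) ℝ}
    (hH : H.IsHermitian) :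
    (1 + c • H).det = ∏ i, (1 + c * hH.eigenvalues i) := by
  set U : Matrix (Fin n) (Fin n) ℝ := (hH.eigenvectorUnitary : Matrix (Fin n) (Fin n) ℝ) with hUdef
  have hU : U * star U = 1 := Matrix.mem_unitaryGroup_iff.mp hH.eigenvectorUnitary.2
  have hd : diagonal (fun i : Fin n => 1 + c * hH.eigenvalues i)
      = 1 + c • diagonal (RCLike.ofReal ∘ hH.eigenvalues : Fin n → ℝ) := by
    ext i j
    by_cases h : i = j <;> simp [h, diagonal]
  have key : U * diagonal (fun i : Fin n => 1 + c * hH.eigenvalues i) * star U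
      = 1 + c • H := by
    rw [hd, mul_add, add_mul, mul_one, hU, Matrix.mul_smul, Matrix.smul_mul]
    conv_rhs => rw [hH.spectral_theorem]
    rfl
  rw [← key, det_mul_right_comm, hU, one_mul, det_diagonal]

lemma quadform_eq {m k : ℕ} (A : Matrix (Fin m) (Fin k) ℝ) (x : Fin k → ℝ) :
    x ⬝ᵥ (Aᴴ * A) *ᵥ x = ∑ i, ((A *ᵥ x) i) ^ 2 := by
  rw [conjTranspose_eq_transpose_of_trivial, ← mulVec_mulVec, dotProduct_mulVec,
    vecMul_transpose]
  simp [dotProduct, sq]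

lemma sum_log_eq {d n : ℕ} {c : ℝ} (hc : 0 ≤ c) (A : Matrix (Fin d) (Fin n) ℝ) :
    ∑ p : Fin n, Real.log (1 + c * (sval A p) ^ 2)
      = Real.log (1 + c • (Aᴴ * A)).det := by
  have hH := Matrix.isHermitian_transpose_mul_self A
  have hP : (Aᴴ * A).PosSemidef := Matrix.posSemidef_conjTranspose_mul_self A
  have hev : ∀ i, 0 ≤ hH.eigenvalues i := fun i => hP.eigenvalues_nonneg i
  have hs : ∀ p : Fin n, (sval A p) ^ 2
      = hH.eigenvalues ((Fin.revPerm.trans (Tuple.sort hH.eigenvalues)) p) := by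
    intro p
    simp only [sval]
    exact Real.sq_sqrt (hev _)
  have hpos : ∀ i : Fin n, (0:ℝ) < 1 + c * hH.eigenvalues i := by
    intro i
    have := mul_nonneg hc (hev i)
    linarith
  rw [conjTranspose_eq_transpose_of_trivial]
  rw [det_one_add_smul_herm c hH,
    Real.log_prod (fun i _ => (hpos i).ne'),
    ← Equiv.sum_comp (Fin.revPerm.trans (Tuple.sort hH.eigenvalues))
      (fun i => Real.log (1 + c * hH.eigenvalues i))]
  exact Finset.sum_congr rfl fun p _ => by rw [hs p]

lemma one_le_det_one_add {n : ℕ} {P : Matrix (Fin n) (Fin n) ℝ} (hP : P.PosSemidef) :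
    1 ≤ (1 + P).det := by
  have h := det_one_add_smul_herm 1 hP.1
  rw [one_smul] at h
  rw [h]
  calc (1:ℝ) = ∏ _i : Fin n, (1:ℝ) := by simp
    _ ≤ ∏ i, (1 + 1 * hP.1.eigenvalues i) := by
        refine Finset.prod_le_prod (fun i _ => zero_le_one) fun i _ => ?_
        have := hP.eigenvalues_nonneg i
        linarith

open scoped MatrixOrder in
lemma det_le_det_add {n : ℕ} {M N : Matrix (Fin n) (Fin n) ℝ}
    (hM : M.PosDef) (hN : N.PosSemidef) : M.det ≤ (M + N).det := by
  set S := CFC.sqrt M with hSdef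
  have hSS : S * S = M := CFC.sqrt_mul_sqrt_self M hM.posSemidef.nonneg
  have hSps : S.PosSemidef := (CFC.sqrt_nonneg M).posSemidef
  have hdetM : 0 < M.det := hM.det_pos
  have hdetS : S.det ≠ 0 := by
    intro h
    rw [← hSS, det_mul, h, mul_zero] at hdetM
    exact lt_irrefl _ hdetM
  have hSunit : IsUnit S.det := isUnit_iff_ne_zero.mpr hdetS
  have hSinv : S * S⁻¹ = 1 := mul_nonsing_inv S hSunit
  have hSinv' : S⁻¹ * S = 1 := nonsing_inv_mul S hSunit
  have hSherm : Sᴴ = S := hSps.1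
  have hSinvherm : (S⁻¹)ᴴ = S⁻¹ := by rw [conjTranspose_nonsing_inv, hSherm]
  have hPps : (S⁻¹ * N * S⁻¹).PosSemidef := by
    have := hN.conjTranspose_mul_mul_same (B := S⁻¹)
    rwa [hSinvherm] at this
  have key : M + N = S * (1 + S⁻¹ * N * S⁻¹) * S := by
    rw [mul_add, add_mul, mul_one, hSS]
    congr 1
    calc N = 1 * N * 1 := by rw [one_mul, mul_one]
      _ = (S * S⁻¹) * N * (S⁻¹ * S) := by rw [hSinv, hSinv']
      _ = S * (S⁻¹ * N * S⁻¹) * S := by noncomm_ring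
  rw [key, det_mul, det_mul]
  have h1 : 1 ≤ (1 + S⁻¹ * N * S⁻¹).det := one_le_det_one_add hPps
  have hdetSnn : 0 ≤ S.det := by
    rw [hSps.1.det_eq_prod_eigenvalues]
    exact Finset.prod_nonneg fun i _ => hSps.eigenvalues_nonneg i
  have hMdet : M.det = S.det * S.det := by rw [← hSS, det_mul]
  rw [hMdet]
  nlinarith

lemma posSemidef_smul_of_nonneg {n : ℕ} {c : ℝ} (hc : 0 ≤ c)
    {A : Matrix (Fin n) (Fin n) ℝ} (hA : A.PosSemidef) : (c • A).PosSemidef := by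
  refine posSemidef_iff_dotProduct_mulVec.mpr ⟨?_, fun x => ?_⟩
  · rw [IsHermitian, conjTranspose_smul, star_trivial, hA.1.eq]
  · rw [smul_mulVec, dotProduct_smul, smul_eq_mul]
    exact mul_nonneg hc ((posSemidef_iff_dotProduct_mulVec.mp hA).2 x)

/-- If ‖F x‖₂ ≤ ‖x‖₂ for all x, then
(1/2)∑ₚ log(1 + (d_z/(nε²)) σ_p(F X)²) ≤ (1/2)∑ₚ log(1 + (d_z/(nε²)) σ_p(X)²). -/
theorem stmt3 {dx dz n : ℕ} (ε : ℝ) (hε : 0 < ε)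
    (F : Matrix (Fin dz) (Fin dx) ℝ)
    (hF : ∀ x : Fin dx → ℝ, ∑ i, (F.mulVec x i) ^ 2 ≤ ∑ i, (x i) ^ 2)
    (X : Matrix (Fin dx) (Fin n) ℝ) :
    (1 / 2) * ∑ p : Fin n, Real.log (1 + ((dz : ℝ) / (n * ε ^ 2)) * (sval (F * X) p) ^ 2)
      ≤ (1 / 2) * ∑ p : Fin n, Real.log (1 + ((dz : ℝ) / (n * ε ^ 2)) * (sval X p) ^ 2) := by
  set c : ℝ := (dz : ℝ) / (n * ε ^ 2) with hcdef
  have hc : 0 ≤ c := by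
    apply div_nonneg (Nat.cast_nonneg _)
    positivity
  have hAps : ((F * X)ᴴ * (F * X)).PosSemidef := Matrix.posSemidef_conjTranspose_mul_self _
  have hBps : (Xᴴ * X).PosSemidef := Matrix.posSemidef_conjTranspose_mul_self _
  set M : Matrix (Fin n) (Fin n) ℝ := 1 + c • ((F * X)ᴴ * (F * X)) with hMdef
  set N : Matrix (Fin n) (Fin n) ℝ := c • (Xᴴ * X) - c • ((F * X)ᴴ * (F * X)) with hNdef
  have hMN : M + N = 1 + c • (Xᴴ * X) := by rw [hMdef, hNdef]; abel
  have hMpd : M.PosDef :=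
    Matrix.PosDef.add_posSemidef Matrix.PosDef.one (posSemidef_smul_of_nonneg hc hAps)
  have hNps : N.PosSemidef := by
    refine posSemidef_iff_dotProduct_mulVec.mpr ⟨?_, fun x => ?_⟩
    · rw [hNdef, IsHermitian, conjTranspose_sub, conjTranspose_smul, conjTranspose_smul,
        star_trivial, hAps.1.eq, hBps.1.eq]
    · rw [hNdef, star_trivial, sub_mulVec, dotProduct_sub, smul_mulVec,
        smul_mulVec, dotProduct_smul, dotProduct_smul, smul_eq_mul, smul_eq_mul]
      have h1 : x ⬝ᵥ ((F * X)ᴴ * (F * X)) *ᵥ x ≤ x ⬝ᵥ (Xᴴ * X) *ᵥ x := by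
        rw [quadform_eq, quadform_eq]
        have := hF (X *ᵥ x)
        calc ∑ i, (((F * X) *ᵥ x) i) ^ 2 = ∑ i, ((F *ᵥ (X *ᵥ x)) i) ^ 2 := by
              rw [mulVec_mulVec]
          _ ≤ ∑ i, ((X *ᵥ x) i) ^ 2 := this
      have := mul_le_mul_of_nonneg_left h1 hc
      linarith
  have hdet : M.det ≤ (1 + c • (Xᴴ * X)).det := by
    rw [← hMN]
    exact det_le_det_add hMpd hNps
  have hMdetpos : 0 < M.det := hMpd.det_pos
  rw [sum_log_eq hc (F * X), sum_log_eq hc X]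
  have := Real.log_le_log hMdetpos hdet
  linarith
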